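/- The digraph D(6) is strongly connected and satisfies max{d(x), d(y)} ≥ 5 for every dominating pair of vertices {x, y}, but its underlying undirected graph is not 2-connected. (Hence the bound 2a ≥ 8 in the 2-connectivity lemma is sharp.) -/

import Mathlib

open Finset

variable {V : Type*}

/-- Total degree (out-degree plus in-degree) of `x` in the digraph with arc relation `A`. -/
noncomputable def deg (A : V → V → Prop) (x : V) : ℕ :=
  Set.ncard {y | A x y} + Set.ncard {y | A y x}

/-- The digraph with arc relation `A` is strongly connected. -/
def StrongConn (A : V → V → Prop) : Prop :=
  ∀ u v : V, Relation.ReflTransGen A u v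

/-- `{x, y}` is a dominating pair: distinct vertices with a common out-neighbour. -/
def DomPair (A : V → V → Prop) (x y : V) : Prop :=
  x ≠ y ∧ ∃ z, A x z ∧ A y z

/-- `X, Y` is a bipartition of the digraph `A`: the two parts partition the vertex
set and every arc joins the two parts. -/
def IsBipartition (A : V → V → Prop) (X Y : Set V) : Prop :=
  Disjoint X Y ∧ X ∪ Y = Set.univ ∧
    ∀ u v, A u v → (u ∈ X ∧ v ∈ Y) ∨ (u ∈ Y ∧ v ∈ X)

/-- The underlying undirected graph of the digraph `A`. -/
def UG (A : V → V → Prop) : SimpleGraph V where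
  Adj u v := u ≠ v ∧ (A u v ∨ A v u)
  symm := ⟨by intro u v h; exact ⟨h.1.symm, h.2.symm⟩⟩
  loopless := ⟨by intro v h; exact h.1 rfl⟩

/-- A graph on a finite vertex set is 2-connected if it has at least 3 vertices and
deleting any single vertex leaves a connected graph. -/
def TwoConnected [Fintype V] (G : SimpleGraph V) : Prop :=
  3 ≤ Fintype.card V ∧ ∀ v : V, (G.induce {u : V | u ≠ v}).Connected

/-- The arcs of the digraph `D(6)`; vertices `0,1,2` are `x₁,x₂,x₃` and `3,4,5`
are `y₁,y₂,y₃`. -/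
def D6Arcs : List (Fin 6 × Fin 6) :=
  [(0,3), (3,0), (1,4), (4,1), (2,5), (5,2),
   (0,5), (5,0), (1,5), (5,1),
   (1,3), (0,4)]

/-- The digraph `D(6)` of Example 2. -/
def D6 (u v : Fin 6) : Prop := (u, v) ∈ D6Arcs

instance : DecidableRel D6 := fun u v => by unfold D6; infer_instance

instance (x y : Fin 6) : Decidable (DomPair D6 x y) := by unfold DomPair; infer_instance

lemma outSet (x : Fin 6) : {y | D6 x y} = ↑((Finset.univ.filter (fun y => D6 x y)) : Finset (Fin 6)) := by
  ext y; simp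

lemma inSet (x : Fin 6) : {y | D6 y x} = ↑((Finset.univ.filter (fun y => D6 y x)) : Finset (Fin 6)) := by
  ext y; simp

lemma deg_eq (x : Fin 6) : deg D6 x =
    (Finset.univ.filter (fun y => D6 x y)).card + (Finset.univ.filter (fun y => D6 y x)).card := by
  unfold deg; rw [outSet, inSet, Set.ncard_coe_finset, Set.ncard_coe_finset]

lemma deg0 : deg D6 0 = 5 := by rw [deg_eq]; decide
lemma deg1 : deg D6 1 = 5 := by rw [deg_eq]; decide
lemma deg3 : deg D6 3 = 3 := by rw [deg_eq]; decide
lemma deg4 : deg D6 4 = 3 := by rw [deg_eq]; decide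
lemma deg5 : deg D6 5 = 6 := by rw [deg_eq]; decide

lemma deg0' : deg D6 (⟨0, by norm_num⟩ : Fin 6) = 5 := deg0
lemma deg1' : deg D6 (⟨1, by norm_num⟩ : Fin 6) = 5 := deg1
lemma deg3' : deg D6 (⟨3, by norm_num⟩ : Fin 6) = 3 := deg3
lemma deg4' : deg D6 (⟨4, by norm_num⟩ : Fin 6) = 3 := deg4
lemma deg5' : deg D6 (⟨5, by norm_num⟩ : Fin 6) = 6 := deg5

lemma step {u v : Fin 6} (h : D6 u v) : Relation.ReflTransGen D6 u v :=
  Relation.ReflTransGen.single h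

lemma to5 (u : Fin 6) : Relation.ReflTransGen D6 u 5 := by
  fin_cases u
  · exact step (by decide)
  · exact step (by decide)
  · exact step (by decide)
  · exact (step (show D6 3 0 by decide)).trans (step (by decide))
  · exact (step (show D6 4 1 by decide)).trans (step (by decide))
  · exact Relation.ReflTransGen.refl

lemma from5 (v : Fin 6) : Relation.ReflTransGen D6 5 v := by
  fin_cases v
  · exact step (by decide)
  · exact step (by decide)
  · exact step (by decide)
  · exact (step (show D6 5 0 by decide)).trans (step (by decide))
  · exact (step (show D6 5 1 by decide)).trans (step (by decide))
  · exact Relation.ReflTransGen.refl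

/-- The digraph `D(6)` is strongly connected and satisfies `max {d(x), d(y)} ≥ 5` for
every dominating pair, but its underlying undirected graph is not 2-connected. -/
theorem stmt9 :
    StrongConn D6 ∧
    (∀ x y : Fin 6, DomPair D6 x y → 5 ≤ max (deg D6 x) (deg D6 y)) ∧
    ¬ TwoConnected (UG D6) := by
  refine ⟨fun u v => (to5 u).trans (from5 v), ?_, ?_⟩
  · intro x y h
    fin_cases x <;> fin_cases y <;>
      first
        | exact absurd h (by decide)
        | norm_num [deg0, deg1, deg3, deg4, deg5, deg0', deg1', deg3', deg4', deg5']
  · rintro ⟨-, h⟩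
    have hc := h 5
    have h2 : (2 : Fin 6) ∈ {u : Fin 6 | u ≠ 5} := by decide
    have h0 : (0 : Fin 6) ∈ {u : Fin 6 | u ≠ 5} := by decide
    obtain ⟨w⟩ := hc.preconnected ⟨2, h2⟩ ⟨0, h0⟩
    cases w with
    | cons h' _ =>
      rename_i b _
      have hadj : (UG D6).Adj 2 b.1 := h'
      have hb : b.1 ≠ 5 := b.2
      have key : ∀ v : Fin 6, (D6 2 v ∨ D6 v 2) → v = 5 := by decide
      exact hb (key b.1 hadj.2)
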